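/- Let x₁, x₂ ∈ ℝ^n with ‖x₁ − x₂‖ = d. Then vol(B_r^n(x₁) \ B_r^n(x₂)) ≤ d · vol(B_r^{n−1}), where B_r^n(x) is the closed ball of radius r about x. -/

import Mathlib

open MeasureTheory Metric Set

lemma coords_ball (m : ℕ) (r t : ℝ) (hr : 0 ≤ r) (p : Fin m → ℝ)
    (c : EuclideanSpace ℝ (Fin (m+1))) :
    dist (((MeasurableEquiv.toLp 2 (Fin (m+1) → ℝ)).symm).symm
      ((MeasurableEquiv.piFinSuccAbove (fun _ => ℝ) 0).symm (t, p))) c ≤ r ↔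
      (t - c 0)^2 + ∑ j, (p j - c j.succ)^2 ≤ r^2 := by
  rw [← pow_le_pow_iff_left₀ dist_nonneg hr two_ne_zero, EuclideanSpace.dist_eq,
    Real.sq_sqrt (by positivity)]
  simp [MeasurableEquiv.piFinSuccAbove_symm_apply, Fin.sum_univ_succ, Real.dist_eq, sq_abs,
    Fin.succAbove, MeasurableEquiv.symm_symm, MeasurableEquiv.coe_toLp]

lemma ball_m (m : ℕ) (r : ℝ) (hr : 0 ≤ r) (p : Fin m → ℝ) :
    ((MeasurableEquiv.toLp 2 (Fin m → ℝ)).symm).symm p ∈ closedBall (0 : EuclideanSpace ℝ (Fin m)) r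
      ↔ ∑ j, (p j)^2 ≤ r^2 := by
  rw [mem_closedBall, ← pow_le_pow_iff_left₀ dist_nonneg hr two_ne_zero,
    EuclideanSpace.dist_eq, Real.sq_sqrt (by positivity)]
  simp [Real.dist_eq, sq_abs, MeasurableEquiv.symm_symm, MeasurableEquiv.coe_toLp]

lemma aux_main (m : ℕ) (r : ℝ) (hr : 0 ≤ r) (d : ℝ) (hd : 0 ≤ d) :
    volume (closedBall (0 : EuclideanSpace ℝ (Fin (m+1))) r \
      closedBall (d • (EuclideanSpace.single (0 : Fin (m+1)) (1:ℝ))) r)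
      ≤ ENNReal.ofReal d * volume (closedBall (0 : EuclideanSpace ℝ (Fin m)) r) := by
  set c : EuclideanSpace ℝ (Fin (m+1)) := d • (EuclideanSpace.single (0 : Fin (m+1)) (1:ℝ))
  have hc0 : c 0 = d := by simp [c]
  have hcs : ∀ j : Fin m, c j.succ = 0 := by
    intro j; simp [c, EuclideanSpace.single_apply, (Fin.succ_ne_zero j)]
  set S : Set (EuclideanSpace ℝ (Fin (m+1))) := closedBall 0 r \ closedBall c r with hS
  have hSm : MeasurableSet S :=
    measurableSet_closedBall.diff measurableSet_closedBall
  set e : (EuclideanSpace ℝ (Fin (m+1))) ≃ᵐ (ℝ × (Fin m → ℝ)) :=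
    ((MeasurableEquiv.toLp 2 (Fin (m+1) → ℝ)).symm).trans
      (MeasurableEquiv.piFinSuccAbove (fun _ => ℝ) 0) with he
  have hmp : MeasurePreserving e volume volume :=
    (volume_preserving_piFinSuccAbove (fun _ : Fin (m+1) => ℝ) 0).comp
      (EuclideanSpace.volume_preserving_symm_measurableEquiv_toLp (Fin (m+1)))
  have h1 : volume S = volume (e.symm ⁻¹' S) :=
    ((hmp.symm e).measure_preimage hSm.nullMeasurableSet).symm
  rw [h1]
  have hTm : MeasurableSet (e.symm ⁻¹' S) := e.symm.measurable hSm
  rw [Measure.volume_eq_prod, Measure.prod_apply_symm hTm]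
  -- bound each slice
  set B : Set (Fin m → ℝ) :=
    ((MeasurableEquiv.toLp 2 (Fin m → ℝ)).symm).symm ⁻¹' closedBall 0 r with hB
  have hBm : MeasurableSet B :=
    ((MeasurableEquiv.toLp 2 (Fin m → ℝ)).symm).symm.measurable measurableSet_closedBall
  have key : ∀ p : Fin m → ℝ,
      volume ((fun t => (t, p)) ⁻¹' (e.symm ⁻¹' S))
        ≤ B.indicator (fun _ => ENNReal.ofReal d) p := by
    intro p
    set Q := ∑ j, (p j)^2 with hQ
    have hmem : ∀ t : ℝ, (t, p) ∈ e.symm ⁻¹' S ↔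
        (t^2 + Q ≤ r^2 ∧ ¬ ((t - d)^2 + Q ≤ r^2)) := by
      intro t
      have hee : e.symm (t, p) = ((MeasurableEquiv.toLp 2 (Fin (m+1) → ℝ)).symm).symm
          ((MeasurableEquiv.piFinSuccAbove (fun _ => ℝ) 0).symm (t, p)) := rfl
      simp only [mem_preimage, hS, mem_diff, mem_closedBall, hee,
        coords_ball m r t hr p 0, coords_ball m r t hr p c]
      simp [hc0, hcs, hQ]
    by_cases hp : p ∈ B
    · have hsub : (fun t => (t, p)) ⁻¹' (e.symm ⁻¹' S) ⊆
          Icc (-(Real.sqrt (r^2 - Q))) (d - Real.sqrt (r^2 - Q)) := by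
        intro t ht
        rw [mem_preimage, hmem] at ht
        obtain ⟨h1', h2'⟩ := ht
        set s := Real.sqrt (r^2 - Q) with hs
        have hQr : t^2 ≤ r^2 - Q := by linarith
        have hts : |t| ≤ s := by
          rw [hs, ← Real.sqrt_sq_eq_abs]
          exact Real.sqrt_le_sqrt hQr
        have hs2 : s^2 = r^2 - Q := Real.sq_sqrt (le_trans (sq_nonneg t) hQr)
        have htd : (t - d)^2 > r^2 - Q := by push_neg at h2'; linarith
        have habs : |t - d| > s := by
          by_contra hcon
          push_neg at hcon
          have := sq_le_sq' (neg_le_of_abs_le hcon) (le_of_abs_le hcon)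
          rw [hs2] at this; linarith
        constructor
        · linarith [neg_le_of_abs_le hts]
        · -- t ≤ d - s : rule out t - d > s
          rcases lt_or_ge (t - d) 0 with h | h
          · have : -(t - d) > s := by rwa [abs_of_neg h] at habs
            linarith
          · have : t - d > s := by rwa [abs_of_nonneg h] at habs
            have hts' := le_of_abs_le hts
            have hsnn : 0 ≤ s := Real.sqrt_nonneg _
            linarith
      calc volume ((fun t => (t, p)) ⁻¹' (e.symm ⁻¹' S)) ≤ _ := measure_mono hsub
        _ ≤ B.indicator (fun _ => ENNReal.ofReal d) p := by
            rw [Set.indicator_of_mem hp, Real.volume_Icc]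
            exact ENNReal.ofReal_le_ofReal (by ring_nf; rfl)
    · have : (fun t => (t, p)) ⁻¹' (e.symm ⁻¹' S) = ∅ := by
        ext t
        rw [mem_preimage, hmem]
        simp only [mem_empty_iff_false, iff_false]
        rintro ⟨h1', -⟩
        exact hp ((ball_m m r hr p).2 (by nlinarith [sq_nonneg t]))
      simp [this]
  calc ∫⁻ p, volume ((fun t => (t, p)) ⁻¹' (e.symm ⁻¹' S))
      ≤ ∫⁻ p, B.indicator (fun _ => ENNReal.ofReal d) p := lintegral_mono key
    _ = ENNReal.ofReal d * volume B := by
        rw [lintegral_indicator_const hBm]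
    _ = ENNReal.ofReal d * volume (closedBall (0 : EuclideanSpace ℝ (Fin m)) r) := by
        rw [((EuclideanSpace.volume_preserving_symm_measurableEquiv_toLp (Fin m)).symm
          _).measure_preimage measurableSet_closedBall.nullMeasurableSet]

theorem ball_diff_volume_le (n : ℕ) (hn : 1 ≤ n) (r : ℝ) (hr : 0 ≤ r) (d : ℝ)
    (x₁ x₂ : EuclideanSpace ℝ (Fin n)) (hd : dist x₁ x₂ = d) :
    (volume (Metric.closedBall x₁ r \ Metric.closedBall x₂ r)).toReal
      ≤ d * (volume (Metric.closedBall (0 : EuclideanSpace ℝ (Fin (n - 1))) r)).toReal := by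
  subst hd
  obtain ⟨m, rfl⟩ : ∃ m, n = m + 1 := ⟨n - 1, by omega⟩
  show _ ≤ _ * (volume (Metric.closedBall (0 : EuclideanSpace ℝ (Fin m)) r)).toReal
  have hd0 : 0 ≤ dist x₁ x₂ := dist_nonneg
  by_cases hx : x₁ = x₂
  · subst hx
    simp
  -- main ENNReal estimate
  have main : volume (closedBall x₁ r \ closedBall x₂ r)
      ≤ ENNReal.ofReal (dist x₁ x₂) * volume (closedBall (0 : EuclideanSpace ℝ (Fin m)) r) := by
    set v : EuclideanSpace ℝ (Fin (m+1)) := x₂ - x₁ with hv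
    have hvne : v ≠ 0 := sub_ne_zero.mpr (Ne.symm hx)
    have hvnorm : ‖v‖ = dist x₁ x₂ := by rw [hv, ← dist_eq_norm, dist_comm]
    -- translation
    have htrans : volume (closedBall x₁ r \ closedBall x₂ r)
        = volume (closedBall (0 : EuclideanSpace ℝ (Fin (m+1))) r \ closedBall v r) := by
      have : (x₁ + ·) ⁻¹' (closedBall x₁ r \ closedBall x₂ r)
          = closedBall (0 : EuclideanSpace ℝ (Fin (m+1))) r \ closedBall v r := by
        ext y
        simp only [Set.mem_preimage, Set.mem_diff, mem_closedBall, dist_eq_norm, hv]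
        have e1 : x₁ + y - x₁ = y - 0 := by abel
        have e2 : x₁ + y - x₂ = y - (x₂ - x₁) := by abel
        rw [e1, e2]
      rw [← this, measure_preimage_add]
    rw [htrans]
    -- rotation
    set u : EuclideanSpace ℝ (Fin (m+1)) := ‖v‖⁻¹ • v with hu
    have hun : ‖u‖ = 1 := norm_smul_inv_norm hvne
    have horth : Orthonormal ℝ (Set.restrict {(0 : Fin (m+1))} (fun _ => u)) := by
      rw [orthonormal_iff_ite]
      rintro ⟨i, hi⟩ ⟨j, hj⟩
      simp only [Set.mem_singleton_iff] at hi hj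
      subst hi; subst hj
      rw [if_pos rfl]; change inner ℝ u u = (1:ℝ); rw [real_inner_self_eq_norm_sq, hun]
      norm_num
    obtain ⟨b, hb⟩ := horth.exists_orthonormalBasis_extension_of_card_eq
      (by simp [finrank_euclideanSpace])
    have hb0 : b 0 = u := hb 0 rfl
    have hrepr : b.repr v = ‖v‖ • EuclideanSpace.single (0 : Fin (m+1)) (1:ℝ) := by
      have : v = ‖v‖ • u := by rw [hu, smul_inv_smul₀ (by simpa using hvne)]
      nth_rewrite 1 [this]
      rw [b.repr.map_smul, ← hb0, b.repr_self]
    have hpre : ⇑b.repr ⁻¹' (closedBall (0 : EuclideanSpace ℝ (Fin (m+1))) r \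
        closedBall (‖v‖ • EuclideanSpace.single (0 : Fin (m+1)) (1:ℝ)) r)
        = closedBall 0 r \ closedBall v r := by
      ext y
      simp only [Set.mem_preimage, Set.mem_diff, mem_closedBall, dist_eq_norm, ← hrepr]
      rw [show b.repr y - b.repr v = b.repr (y - v) from (_root_.map_sub b.repr y v).symm,
        b.repr.norm_map,
        show b.repr y - 0 = b.repr (y - 0) by rw [_root_.map_sub, map_zero],
        b.repr.norm_map]
    have hrot : volume (closedBall (0 : EuclideanSpace ℝ (Fin (m+1))) r \ closedBall v r)
        = volume (closedBall (0 : EuclideanSpace ℝ (Fin (m+1))) r \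
            closedBall (‖v‖ • EuclideanSpace.single (0 : Fin (m+1)) (1:ℝ)) r) := by
      rw [← hpre]
      exact b.measurePreserving_repr.measure_preimage
        ((measurableSet_closedBall.diff measurableSet_closedBall).nullMeasurableSet)
    rw [hrot, ← hvnorm]
    exact aux_main m r hr ‖v‖ (norm_nonneg v)
  have hfin : ENNReal.ofReal (dist x₁ x₂) * volume (closedBall (0 : EuclideanSpace ℝ (Fin m)) r)
      ≠ ⊤ := ENNReal.mul_ne_top ENNReal.ofReal_ne_top measure_closedBall_lt_top.ne
  calc (volume (closedBall x₁ r \ closedBall x₂ r)).toReal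
      ≤ (ENNReal.ofReal (dist x₁ x₂) *
          volume (closedBall (0 : EuclideanSpace ℝ (Fin m)) r)).toReal :=
        ENNReal.toReal_mono hfin main
    _ = dist x₁ x₂ * (volume (closedBall (0 : EuclideanSpace ℝ (Fin m)) r)).toReal := by
        rw [ENNReal.toReal_mul, ENNReal.toReal_ofReal hd0]
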